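/- Fix integers q ≥ 2, n ≥ 1 and M ≥ 1. Given probability mass functions Q_1, …, Q_M on (Fin q)^n and subsets D_1, …, D_M ⊆ (Fin q)^n, there exist probability mass functions Q'_1, …, Q'_M on the set of types of (Fin q)^n and functions P_1, …, P_M from the set of types to [0,1] such that for all i ≠ j, Σ_c Q'_i(c)·P_j(c) = Σ_x Q_i(x)·|T_x ∩ D_j|/|T_x|, and for all i, Σ_c Q'_i(c)·(1 − P_i(c)) = Σ_x Q_i(x)·|T_x \ D_i|/|T_x|. That is, every ID code with deterministic decoders for the q-ary uniform permutation channel induces an ID code with stochastic decoders for the noiseless channel over types having exactly the same error probabilities λ_{i→j} and λ_{i↛i}. -/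

import Mathlib

open Finset

/-- The type class of `x`: all vectors obtained from `x` by permuting its coordinates. -/
def typeClass (q n : ℕ) (x : Fin n → Fin q) : Finset (Fin n → Fin q) :=
  Finset.univ.filter fun y => ∃ σ : Equiv.Perm (Fin n), y = fun k => x (σ k)

/-- `Q` is a probability mass function on a finite type. -/
def IsPMF {α : Type*} [Fintype α] (Q : α → ℝ) : Prop :=
  (∀ a, 0 ≤ Q a) ∧ ∑ a, Q a = 1

/-- False-acceptance probability `λ_{i→j}` of an `(n, M)` ID code for the `q`-ary
uniform permutation channel. -/
noncomputable def lamFA (q n : ℕ) {M : ℕ} (Q : Fin M → (Fin n → Fin q) → ℝ)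
    (D : Fin M → Finset (Fin n → Fin q)) (i j : Fin M) : ℝ :=
  ∑ x, Q i x * (((typeClass q n x ∩ D j).card : ℝ) / ((typeClass q n x).card : ℝ))

/-- Missed-detection probability `λ_{i↛i}` of an `(n, M)` ID code for the `q`-ary
uniform permutation channel. -/
noncomputable def lamMD (q n : ℕ) {M : ℕ} (Q : Fin M → (Fin n → Fin q) → ℝ)
    (D : Fin M → Finset (Fin n → Fin q)) (i : Fin M) : ℝ :=
  ∑ x, Q i x * (((typeClass q n x \ D i).card : ℝ) / ((typeClass q n x).card : ℝ))


/-- The type (empirical histogram) of a vector `x ∈ (Fin q)^n`. -/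
def typeOf (q n : ℕ) (x : Fin n → Fin q) : Fin q → ℕ :=
  fun a => (Finset.univ.filter fun k => x k = a).card

/-- The set of all types on `(Fin q)^n` (realized as histograms of actual vectors;
for `q ≥ 1` this is exactly the set of `c : Fin q → ℕ` with `∑ a, c a = n`). -/
def typesOf (q n : ℕ) : Finset (Fin q → ℕ) :=
  Finset.image (typeOf q n) Finset.univ


lemma listaux {α : Type*} (p : α → Bool) (l : List α) :
    (List.filter p l).length = (l.map (fun a => if p a then 1 else 0)).sum := by
  induction l with
  | nil => simp
  | cons h t ih => by_cases hp : p h <;> simp [List.filter_cons, hp, ih, Nat.add_comm]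

lemma count_ofFn {n q : ℕ} (f : Fin n → Fin q) (b : Fin q) :
    (List.ofFn f).count b = typeOf q n f b := by
  rw [List.ofFn_eq_map, List.count_eq_countP, List.countP_map,
    List.countP_eq_length_filter, typeOf, Finset.card_filter, Fin.sum_univ_def, listaux]
  simp [Function.comp]

lemma typeOf_comp_perm {n q : ℕ} (x : Fin n → Fin q) (σ : Equiv.Perm (Fin n)) :
    typeOf q n (fun k => x (σ k)) = typeOf q n x := by
  funext a
  rw [← count_ofFn, ← count_ofFn]
  exact (σ.ofFn_comp_perm x).count_eq a

lemma mono_unique {n q : ℕ} {f g : Fin n → Fin q} (hf : Monotone f) (hg : Monotone g)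
    (h : typeOf q n f = typeOf q n g) : f = g :=
  List.ofFn_injective <| List.Perm.eq_of_sortedLE hf.sortedLE_ofFn hg.sortedLE_ofFn
    (List.perm_iff_count.2 fun b => by rw [count_ofFn, count_ofFn, h])

lemma exists_perm {n q : ℕ} {x y : Fin n → Fin q} (h : typeOf q n y = typeOf q n x) :
    ∃ σ : Equiv.Perm (Fin n), y = fun k => x (σ k) := by
  refine ⟨(Tuple.sort y).symm.trans (Tuple.sort x), ?_⟩
  have key : x ∘ Tuple.sort x = y ∘ Tuple.sort y :=
    mono_unique (Tuple.monotone_sort x) (Tuple.monotone_sort y)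
      (by rw [show x ∘ Tuple.sort x = fun k => x (Tuple.sort x k) from rfl,
        typeOf_comp_perm, show y ∘ Tuple.sort y = fun k => y (Tuple.sort y k) from rfl,
        typeOf_comp_perm, h])
  funext k
  have := congrFun key.symm ((Tuple.sort y).symm k)
  simpa using this

/-- The fiber of a type `c`: all vectors of type `c`. -/
noncomputable def fib (q n : ℕ) (c : Fin q → ℕ) : Finset (Fin n → Fin q) :=
  Finset.univ.filter fun y => typeOf q n y = c

lemma typeClass_eq {q n : ℕ} (x : Fin n → Fin q) :
    typeClass q n x = fib q n (typeOf q n x) := by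
  ext y
  simp only [typeClass, fib, Finset.mem_filter, Finset.mem_univ, true_and]
  constructor
  · rintro ⟨σ, rfl⟩; exact typeOf_comp_perm x σ
  · exact exists_perm

lemma grouping {q n : ℕ} (f : (Fin n → Fin q) → ℝ) :
    ∑ c : {c // c ∈ typesOf q n}, ∑ x ∈ fib q n c.val, f x = ∑ x, f x := by
  rw [Finset.sum_coe_sort (typesOf q n) (fun c => ∑ x ∈ fib q n c, f x)]
  exact Finset.sum_fiberwise_of_maps_to (fun x _ => Finset.mem_image_of_mem _ (mem_univ x)) f

lemma fib_card_pos {q n : ℕ} {c : Fin q → ℕ} (hc : c ∈ typesOf q n) :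
    0 < (fib q n c).card := by
  obtain ⟨x, -, rfl⟩ := Finset.mem_image.1 hc
  exact Finset.card_pos.2 ⟨x, by simp [fib]⟩

/-- Every ID code with deterministic decoders for the `q`-ary uniform permutation channel
induces an ID code with stochastic decoders for the noiseless channel over types having
exactly the same error probabilities `λ_{i→j}` and `λ_{i↛i}`. -/
theorem permutationToNoiselessTypes (q n M : ℕ) (hq : 2 ≤ q) (hn : 1 ≤ n) (hM : 1 ≤ M)
    (Q : Fin M → (Fin n → Fin q) → ℝ) (hQ : ∀ i, IsPMF (Q i))
    (D : Fin M → Finset (Fin n → Fin q)) :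
    ∃ (Q' : Fin M → {c // c ∈ typesOf q n} → ℝ)
      (P : Fin M → {c // c ∈ typesOf q n} → ℝ),
      (∀ i, IsPMF (Q' i)) ∧
      (∀ i c, 0 ≤ P i c ∧ P i c ≤ 1) ∧
      (∀ i j, i ≠ j → ∑ c, Q' i c * P j c = lamFA q n Q D i j) ∧
      (∀ i, ∑ c, Q' i c * (1 - P i c) = lamMD q n Q D i) := by
  classical
  set F : (Fin q → ℕ) → Finset (Fin n → Fin q) := fib q n with hF
  refine ⟨fun i c => ∑ x ∈ F c.val, Q i x,
    fun j c => ((F c.val ∩ D j).card : ℝ) / ((F c.val).card : ℝ), ?_, ?_, ?_, ?_⟩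
  · intro i
    constructor
    · intro c
      exact Finset.sum_nonneg fun x _ => (hQ i).1 x
    · rw [grouping (Q i)]
      exact (hQ i).2
  · intro j c
    have hpos : (0 : ℝ) < ((F c.val).card : ℝ) := by
      exact_mod_cast fib_card_pos c.property
    constructor
    · positivity
    · rw [div_le_one hpos]
      exact_mod_cast Finset.card_le_card (Finset.inter_subset_left)
  · intro i j _
    rw [lamFA, ← grouping (fun x => Q i x *
        (((typeClass q n x ∩ D j).card : ℝ) / ((typeClass q n x).card : ℝ)))]
    refine Finset.sum_congr rfl fun c _ => ?_
    rw [Finset.sum_mul]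
    refine Finset.sum_congr rfl fun x hx => ?_
    have hx' : typeOf q n x = c.val := (Finset.mem_filter.1 hx).2
    rw [typeClass_eq, hx']
  · intro i
    rw [lamMD, ← grouping (fun x => Q i x *
        (((typeClass q n x \ D i).card : ℝ) / ((typeClass q n x).card : ℝ)))]
    refine Finset.sum_congr rfl fun c _ => ?_
    have hpos : (0 : ℝ) < ((F c.val).card : ℝ) := by
      exact_mod_cast fib_card_pos c.property
    have hkey : 1 - ((F c.val ∩ D i).card : ℝ) / ((F c.val).card : ℝ)
        = ((F c.val \ D i).card : ℝ) / ((F c.val).card : ℝ) := by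
      rw [eq_div_iff hpos.ne', sub_mul, one_mul, div_mul_cancel₀ _ hpos.ne']
      have := Finset.card_sdiff_add_card_inter (F c.val) (D i)
      have : ((F c.val \ D i).card : ℝ) + ((F c.val ∩ D i).card : ℝ)
          = ((F c.val).card : ℝ) := by exact_mod_cast this
      linarith
    rw [hkey, Finset.sum_mul]
    refine Finset.sum_congr rfl fun x hx => ?_
    have hx' : typeOf q n x = c.val := (Finset.mem_filter.1 hx).2
    rw [typeClass_eq, hx']
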